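/- For 1 ≤ h ≤ 1.18, let K_h ⊆ ℝ³ be the right circular cone with apex at the origin, axis the positive x₃-axis, height h, and base the disk of radius √(2−h²) at height h, i.e. K_h = {(x₁,x₂,x₃) : 0 ≤ x₃ ≤ h, h²·(x₁²+x₂²) ≤ (2−h²)·x₃²}. Then vol(K_h) = π(2−h²)h/3, vol(K_h ∩ B(0,1)) = (2π/3)·(1 − h/√2), so the density vol(K_h ∩ B(0,1))/vol(K_h) equals √2/(h² + h√2); this density is at most 2 − √2, with maximum attained at h = 1, and 2 − √2 < δ_oct. -/

import Mathlib

open MeasureTheory Real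

noncomputable section

abbrev E3 : Type := EuclideanSpace ℝ (Fin 3)

/-- The density of the regular octahedron. -/
def δoct : ℝ := (-3 * π + 12 * arccos (1 / Real.sqrt 3)) / Real.sqrt 8

lemma disk_area (q : ℝ) :
    volume {y : Fin 2 → ℝ | y 0 ^ 2 + y 1 ^ 2 ≤ q} = ENNReal.ofReal (π * q) := by
  rcases le_or_gt 0 q with hq | hq
  · have e := EuclideanSpace.volume_preserving_symm_measurableEquiv_toLp (Fin 2)
    have hpre : (MeasurableEquiv.toLp 2 (Fin 2 → ℝ)).symm ⁻¹'
        {y : Fin 2 → ℝ | y 0 ^ 2 + y 1 ^ 2 ≤ q}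
        = Metric.closedBall (0 : EuclideanSpace ℝ (Fin 2)) (Real.sqrt q) := by
      ext x
      simp only [Set.mem_preimage, Set.mem_setOf_eq, Metric.mem_closedBall, dist_zero_right,
        EuclideanSpace.norm_eq]
      rw [show (MeasurableEquiv.toLp 2 (Fin 2 → ℝ)).symm x = x.ofLp from rfl]
      rw [← Real.sqrt_le_sqrt_iff (by positivity)]
      have : ∑ i : Fin 2, ‖x i‖ ^ 2 = x 0 ^ 2 + x 1 ^ 2 := by
        simp [Fin.sum_univ_two, sq_abs]
      rw [this]
    have hmeas : MeasurableSet {y : Fin 2 → ℝ | y 0 ^ 2 + y 1 ^ 2 ≤ q} :=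
      measurableSet_le
        (((measurable_pi_apply 0).pow_const 2).add ((measurable_pi_apply 1).pow_const 2))
        measurable_const
    have hm := e.measure_preimage hmeas.nullMeasurableSet
    rw [hpre] at hm
    rw [← hm, EuclideanSpace.volume_closedBall]
    have h2 : (Fintype.card (Fin 2)) = 2 := by simp
    rw [h2, show ((2:ℕ):ℝ)/2+1 = 2 by norm_num, Real.Gamma_two, div_one,
      Real.sq_sqrt Real.pi_nonneg, ← ENNReal.ofReal_pow (Real.sqrt_nonneg q),
      Real.sq_sqrt hq, ← ENNReal.ofReal_mul hq, mul_comm]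
  · have hempty : {y : Fin 2 → ℝ | y 0 ^ 2 + y 1 ^ 2 ≤ q} = ∅ := by
      ext y; simp only [Set.mem_setOf_eq, Set.mem_empty_iff_false, iff_false, not_le]
      calc q < 0 := hq
        _ ≤ y 0 ^ 2 + y 1 ^ 2 := by positivity
    rw [hempty, measure_empty, Eq.comm, ENNReal.ofReal_eq_zero]
    nlinarith [Real.pi_pos]

lemma vol_solid (f : ℝ → ℝ) (hf : Continuous f) (a b : ℝ) :
    volume {x : E3 | x 2 ∈ Set.Icc a b ∧ (x 0)^2 + (x 1)^2 ≤ f (x 2)}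
      = ∫⁻ z in Set.Icc a b, ENNReal.ofReal (π * f z) := by
  set T : Set (ℝ × (Fin 2 → ℝ)) :=
    {p | p.1 ∈ Set.Icc a b ∧ (p.2 0)^2 + (p.2 1)^2 ≤ f p.1} with hTdef
  have hT : MeasurableSet T := by
    apply MeasurableSet.inter
    · exact measurable_fst measurableSet_Icc
    · exact measurableSet_le
        (((measurable_pi_apply 0).comp measurable_snd |>.pow_const 2).add
          ((measurable_pi_apply 1).comp measurable_snd |>.pow_const 2))
        (hf.measurable.comp measurable_fst)
  have e3 := EuclideanSpace.volume_preserving_symm_measurableEquiv_toLp (Fin 3)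
  set S' : Set (Fin 3 → ℝ) :=
    {y | y 2 ∈ Set.Icc a b ∧ (y 0)^2 + (y 1)^2 ≤ f (y 2)} with hS'def
  have hS' : MeasurableSet S' := by
    apply MeasurableSet.inter
    · exact (measurable_pi_apply 2) measurableSet_Icc
    · exact measurableSet_le
        (((measurable_pi_apply 0).pow_const 2).add ((measurable_pi_apply 1).pow_const 2))
        (hf.measurable.comp (measurable_pi_apply 2))
  have hpre3 : (MeasurableEquiv.toLp 2 (Fin 3 → ℝ)).symm ⁻¹' S'
      = {x : E3 | x 2 ∈ Set.Icc a b ∧ (x 0)^2 + (x 1)^2 ≤ f (x 2)} := rfl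
  have hm3 := e3.measure_preimage hS'.nullMeasurableSet
  rw [hpre3] at hm3
  rw [hm3]
  have mp := volume_preserving_piFinSuccAbove (fun _ : Fin 3 => ℝ) 2
  have hpre2 : (MeasurableEquiv.piFinSuccAbove (fun _ : Fin 3 => ℝ) 2) ⁻¹' T = S' := by
    ext g
    have k2 : (MeasurableEquiv.piFinSuccAbove (fun _ : Fin 3 => ℝ) 2) g
        = (g 2, fun j => g ((2:Fin 3).succAbove j)) := by
      simp only [MeasurableEquiv.piFinSuccAbove, MeasurableEquiv.coe_mk,
        Fin.insertNthEquiv, Equiv.coe_fn_symm_mk]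
      rfl
    simp only [Set.mem_preimage, hTdef, Set.mem_setOf_eq, k2, hS'def,
      show (2:Fin 3).succAbove (0 : Fin 2) = 0 by decide,
      show (2:Fin 3).succAbove (1 : Fin 2) = 1 by decide]
  have hm2 := mp.measure_preimage hT.nullMeasurableSet
  rw [hpre2] at hm2
  rw [hm2, Measure.volume_eq_prod, Measure.prod_apply hT]
  have hslice : ∀ z : ℝ, volume (Prod.mk z ⁻¹' T)
      = (Set.Icc a b).indicator (fun z => ENNReal.ofReal (π * f z)) z := by
    intro z
    by_cases hz : z ∈ Set.Icc a b
    · have : Prod.mk z ⁻¹' T = {y : Fin 2 → ℝ | y 0 ^ 2 + y 1 ^ 2 ≤ f z} := by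
        ext y
        simp only [Set.mem_preimage, hTdef, Set.mem_setOf_eq]
        exact ⟨fun hh => hh.2, fun hh => ⟨hz, hh⟩⟩
      rw [this, disk_area, Set.indicator_of_mem hz]
    · have : Prod.mk z ⁻¹' T = ∅ :=
        Set.eq_empty_iff_forall_notMem.2 fun y hy => hz hy.1
      rw [this, measure_empty, Set.indicator_of_notMem hz]
  rw [lintegral_congr hslice, lintegral_indicator measurableSet_Icc]

lemma lint_Icc (g : ℝ → ℝ) (hg : Continuous g) (a b : ℝ) (hab : a ≤ b)
    (hnn : ∀ z ∈ Set.Icc a b, 0 ≤ g z) :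
    ∫⁻ z in Set.Icc a b, ENNReal.ofReal (g z) = ENNReal.ofReal (∫ z in a..b, g z) := by
  rw [intervalIntegral.integral_of_le hab, ← MeasureTheory.integral_Icc_eq_integral_Ioc,
    ofReal_integral_eq_lintegral_ofReal hg.integrableOn_Icc
      ((ae_restrict_iff' measurableSet_Icc).2 (Filter.Eventually.of_forall hnn))]


lemma aux_cone (h : ℝ) (h1 : 1 ≤ h) (h2 : h ≤ 1.18) :
    volume {x : E3 | x 2 ∈ Set.Icc 0 h ∧ (x 0)^2 + (x 1)^2 ≤ (2-h^2)/h^2 * (x 2)^2}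
      = ENNReal.ofReal (π * (2 - h^2) * h / 3) := by
  have hhpos : (0:ℝ) < h := by linarith
  have hh0 : h ≠ 0 := ne_of_gt hhpos
  have hAnn : (0:ℝ) ≤ (2-h^2)/h^2 := by
    apply div_nonneg (by nlinarith) (by positivity)
  refine (vol_solid (fun z => (2-h^2)/h^2 * z^2) (by fun_prop) 0 h).trans ?_
  rw [lint_Icc _ (by fun_prop) 0 h (by linarith)
    (fun z hz => mul_nonneg Real.pi_nonneg (by positivity))]
  congr 1
  have hfun : (fun z : ℝ => π * ((2-h^2)/h^2 * z^2))
      = fun z : ℝ => (π * ((2-h^2)/h^2)) * z^2 := by funext z; ring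
  rw [hfun, intervalIntegral.integral_const_mul, integral_pow]
  push_cast
  field_simp
  ring

lemma aux_cap (h : ℝ) (h1 : 1 ≤ h) (h2 : h ≤ 1.18) :
    volume {x : E3 | x 2 ∈ Set.Icc 0 1 ∧
        (x 0)^2 + (x 1)^2 ≤ min ((2-h^2)/h^2 * (x 2)^2) (1 - (x 2)^2)}
      = ENNReal.ofReal ((2 * π / 3) * (1 - h / Real.sqrt 2)) := by
  have hs2 : Real.sqrt 2 ^ 2 = 2 := Real.sq_sqrt (by norm_num)
  have hspos : 0 < Real.sqrt 2 := Real.sqrt_pos.2 (by norm_num)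
  have hhpos : (0:ℝ) < h := by linarith
  have hh2 : (0:ℝ) < h^2 := by positivity
  have hh0 : h ≠ 0 := ne_of_gt hhpos
  have h2pos : (0:ℝ) < 2 - h^2 := by nlinarith
  have hAnn : (0:ℝ) ≤ (2-h^2)/h^2 := by positivity
  have hhs : h < Real.sqrt 2 := by nlinarith
  set z0 : ℝ := h / Real.sqrt 2 with hz0
  have hz0pos : 0 < z0 := by positivity
  have hz0le : z0 ≤ 1 := by rw [hz0, div_le_one hspos]; linarith
  have hz0sq : z0^2 = h^2/2 := by rw [hz0, div_pow, hs2]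
  have hcont : Continuous (fun z : ℝ => min ((2-h^2)/h^2 * z^2) (1 - z^2)) :=
    (continuous_const.mul (continuous_pow 2)).min
      (continuous_const.sub (continuous_pow 2))
  refine (vol_solid (fun z => min ((2-h^2)/h^2 * z^2) (1 - z^2)) hcont 0 1).trans ?_
  rw [lint_Icc _ (by fun_prop) 0 1 (by norm_num)
    (fun z hz => by
      have h0 := hz.1; have h1' := hz.2
      exact mul_nonneg Real.pi_nonneg (le_min (by positivity) (by nlinarith)))]
  congr 1
  have hi1 : IntervalIntegrable (fun z : ℝ => π * min ((2-h^2)/h^2 * z^2) (1 - z^2))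
      volume 0 z0 := (continuous_const.mul hcont).intervalIntegrable _ _
  have hi2 : IntervalIntegrable (fun z : ℝ => π * min ((2-h^2)/h^2 * z^2) (1 - z^2))
      volume z0 1 := (continuous_const.mul hcont).intervalIntegrable _ _
  rw [← intervalIntegral.integral_add_adjacent_intervals hi1 hi2]
  have hleft : ∫ z in (0:ℝ)..z0, π * min ((2-h^2)/h^2 * z^2) (1 - z^2)
      = ∫ z in (0:ℝ)..z0, (π * ((2-h^2)/h^2)) * z^2 := by
    apply intervalIntegral.integral_congr
    intro z hz
    rw [Set.uIcc_of_le hz0pos.le] at hz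
    have hzl : 0 ≤ z := hz.1
    have hzr : z ≤ z0 := hz.2
    have hmin : (2-h^2)/h^2 * z^2 ≤ 1 - z^2 := by
      have e1 : (2-h^2)/h^2 * z^2 + z^2 = 2 * z^2 / h^2 := by field_simp; ring
      have e2 : z^2 ≤ h^2/2 := by nlinarith
      have e3 : 2 * z^2 / h^2 ≤ 1 := by rw [div_le_one hh2]; nlinarith
      nlinarith
    beta_reduce; rw [min_eq_left hmin]; ring
  have hright : ∫ z in z0..(1:ℝ), π * min ((2-h^2)/h^2 * z^2) (1 - z^2)
      = ∫ z in z0..(1:ℝ), (π - π * z^2) := by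
    apply intervalIntegral.integral_congr
    intro z hz
    rw [Set.uIcc_of_le hz0le] at hz
    have hzl : z0 ≤ z := hz.1
    have hmin : 1 - z^2 ≤ (2-h^2)/h^2 * z^2 := by
      have e1 : (2-h^2)/h^2 * z^2 + z^2 = 2 * z^2 / h^2 := by field_simp; ring
      have e2 : h^2/2 ≤ z^2 := by nlinarith
      have e3 : (1:ℝ) ≤ 2 * z^2 / h^2 := by rw [le_div_iff₀ hh2]; nlinarith
      nlinarith
    beta_reduce; rw [min_eq_right hmin]; ring
  rw [hleft, hright, intervalIntegral.integral_const_mul, integral_pow,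
    intervalIntegral.integral_sub intervalIntegrable_const
      ((by fun_prop : Continuous fun z : ℝ => π * z^2).intervalIntegrable _ _),
    intervalIntegral.integral_const, intervalIntegral.integral_const_mul, integral_pow,
    smul_eq_mul]
  rw [show (2*π/3) * (1 - h / Real.sqrt 2) = 2*π/3*(1-z0) from by rw [hz0]]
  clear_value z0
  push_cast
  field_simp
  linear_combination (6*z0) * hz0sq

set_option maxHeartbeats 1000000 in
/-- Type 3 regions: the right circular cone with apex at the origin, height
`h ∈ [1, 1.18]` and base a disk of radius `√(2-h²)` has density
`√2/(h² + h√2) ≤ 2 - √2 < δ_oct`, with the maximum at `h = 1`. -/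
theorem cone_density (h : ℝ) (h1 : 1 ≤ h) (h2 : h ≤ 1.18) (K : Set E3)
    (hK : K = {x : E3 | 0 ≤ x 2 ∧ x 2 ≤ h ∧
      h ^ 2 * ((x 0) ^ 2 + (x 1) ^ 2) ≤ (2 - h ^ 2) * (x 2) ^ 2}) :
    (volume K).toReal = π * (2 - h ^ 2) * h / 3 ∧
    (volume (K ∩ Metric.closedBall 0 1)).toReal = (2 * π / 3) * (1 - h / Real.sqrt 2) ∧
    (volume (K ∩ Metric.closedBall 0 1)).toReal / (volume K).toReal =
      Real.sqrt 2 / (h ^ 2 + h * Real.sqrt 2) ∧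
    Real.sqrt 2 / (h ^ 2 + h * Real.sqrt 2) ≤ 2 - Real.sqrt 2 ∧
    (h = 1 → Real.sqrt 2 / (h ^ 2 + h * Real.sqrt 2) = 2 - Real.sqrt 2) ∧
    2 - Real.sqrt 2 < δoct := by
  have hs2 : Real.sqrt 2 ^ 2 = 2 := Real.sq_sqrt (by norm_num)
  have hspos : 0 < Real.sqrt 2 := Real.sqrt_pos.2 (by norm_num)
  have hs2ub : Real.sqrt 2 ≤ 1.4142136 := by nlinarith
  have hs2lb : (1.414 : ℝ) ≤ Real.sqrt 2 := by nlinarith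
  have hhpos : (0:ℝ) < h := by linarith
  have hh2 : (0:ℝ) < h^2 := by positivity
  have h2pos : (0:ℝ) < 2 - h^2 := by nlinarith
  have hhs : h < Real.sqrt 2 := by nlinarith
  -- description of K
  have hK1 : K = {x : E3 | x 2 ∈ Set.Icc 0 h ∧ (x 0)^2 + (x 1)^2 ≤ (2-h^2)/h^2 * (x 2)^2} := by
    rw [hK]; ext x
    simp only [Set.mem_setOf_eq, Set.mem_Icc]
    constructor
    · rintro ⟨ha, hb, hc⟩
      refine ⟨⟨ha, hb⟩, ?_⟩
      rw [div_mul_eq_mul_div, le_div_iff₀ hh2]; nlinarith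
    · rintro ⟨⟨ha, hb⟩, hc⟩
      refine ⟨ha, hb, ?_⟩
      rw [div_mul_eq_mul_div, le_div_iff₀ hh2] at hc; nlinarith
  have hVK : volume K = ENNReal.ofReal (π * (2 - h^2) * h / 3) := by
    rw [hK1]; exact aux_cone h h1 h2
  have hVKnn : (0:ℝ) ≤ π * (2 - h^2) * h / 3 := by
    have := Real.pi_pos; positivity
  -- description of K ∩ B
  have hB : ∀ x : E3, x ∈ Metric.closedBall (0:E3) 1 ↔
      (x 0)^2 + (x 1)^2 + (x 2)^2 ≤ 1 := by
    intro x
    rw [Metric.mem_closedBall, dist_zero_right, EuclideanSpace.norm_eq,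
      show (1:ℝ) = Real.sqrt 1 from (Real.sqrt_one).symm,
      Real.sqrt_le_sqrt_iff (by positivity), Real.sqrt_one]
    simp [Fin.sum_univ_three, sq_abs]
  have hKB : K ∩ Metric.closedBall 0 1 = {x : E3 | x 2 ∈ Set.Icc 0 1 ∧
      (x 0)^2 + (x 1)^2 ≤ min ((2-h^2)/h^2 * (x 2)^2) (1 - (x 2)^2)} := by
    ext x
    rw [Set.mem_inter_iff, hK1, hB x]
    simp only [Set.mem_setOf_eq, Set.mem_Icc, le_min_iff]
    constructor
    · rintro ⟨⟨⟨ha, hb⟩, hc⟩, hd⟩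
      have hsq : (0:ℝ) ≤ (x 0)^2 + (x 1)^2 := by positivity
      exact ⟨⟨ha, by nlinarith⟩, hc, by nlinarith⟩
    · rintro ⟨⟨ha, hb⟩, hc, hd⟩
      exact ⟨⟨⟨ha, by linarith⟩, hc⟩, by nlinarith⟩
  have hVB : volume (K ∩ Metric.closedBall 0 1)
      = ENNReal.ofReal ((2 * π / 3) * (1 - h / Real.sqrt 2)) := by
    rw [hKB]; exact aux_cap h h1 h2
  have hVBnn : (0:ℝ) ≤ (2 * π / 3) * (1 - h / Real.sqrt 2) := by
    have hd : h / Real.sqrt 2 ≤ 1 := by rw [div_le_one hspos]; linarith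
    have := Real.pi_pos
    nlinarith
  have hden : (0:ℝ) < π * (2 - h^2) * h / 3 := by
    have := Real.pi_pos; positivity
  have hden2 : (0:ℝ) < h^2 + h * Real.sqrt 2 := by positivity
  refine ⟨by rw [hVK, ENNReal.toReal_ofReal hVKnn],
    by rw [hVB, ENNReal.toReal_ofReal hVBnn], ?_, ?_, ?_, ?_⟩
  · rw [hVB, hVK, ENNReal.toReal_ofReal hVBnn, ENNReal.toReal_ofReal hVKnn,
      div_eq_div_iff hden.ne' hden2.ne']
    field_simp
    linear_combination h^2 * hs2
  · clear hVK hVB hKB hK1 hB hK hVKnn hVBnn hden K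
    rw [div_le_iff₀ hden2]
    nlinarith [mul_nonneg (mul_nonneg (by nlinarith : (0:ℝ) ≤ 2 - Real.sqrt 2)
      (by linarith : (0:ℝ) ≤ h - 1)) (by nlinarith : (0:ℝ) ≤ h + 1 + Real.sqrt 2)]
  · clear hVK hVB hKB hK1 hB hK hVKnn hVBnn hden hden2 K
    intro hh1
    subst hh1
    rw [eq_comm, eq_div_iff (by positivity)]
    nlinarith
  · clear hVK hVB hKB hK1 hB hK hVKnn hVBnn hden hden2 K
    have hs3 : Real.sqrt 3 ^ 2 = 3 := Real.sq_sqrt (by norm_num)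
    have hs3lb : (1.7 : ℝ) ≤ Real.sqrt 3 := by nlinarith [Real.sqrt_nonneg 3]
    have h8 : Real.sqrt 8 = 2 * Real.sqrt 2 := by
      rw [show (8:ℝ) = 2^2*2 by norm_num, Real.sqrt_mul (by positivity),
        Real.sqrt_sq (by norm_num)]
    have habs : |(0.462 : ℝ)| = 0.462 := abs_of_nonneg (by norm_num)
    have hb := Real.sin_bound (x := 0.462) (by rw [habs]; norm_num)
    rw [habs] at hb
    have hsin : Real.sin 0.462 ≤ 0.448 := by
      have hb2 := (abs_le.1 hb).2
      nlinarith
    have hcos : (0.598 : ℝ) ≤ Real.cos 0.924 := by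
      have hc : Real.cos 0.924 = 1 - 2 * Real.sin 0.462 ^ 2 := by
        rw [show (0.924 : ℝ) = 2 * 0.462 by norm_num, Real.cos_two_mul']
        linear_combination Real.sin_sq_add_cos_sq 0.462
      rw [hc]
      have hsnn : 0 ≤ Real.sin 0.462 := Real.sin_nonneg_of_nonneg_of_le_pi (by norm_num)
        (by nlinarith [Real.pi_gt_three])
      nlinarith
    have hinv : 1 / Real.sqrt 3 ≤ Real.cos 0.924 := by
      have : 1 / Real.sqrt 3 ≤ 0.598 := by
        rw [div_le_iff₀ (by positivity)]; nlinarith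
      linarith
    have hAc : (0.924 : ℝ) ≤ arccos (1 / Real.sqrt 3) := by
      have ha1 : arccos (Real.cos 0.924) ≤ arccos (1 / Real.sqrt 3) := by
        rw [Real.arccos, Real.arccos]
        have := Real.monotone_arcsin hinv
        linarith
      rwa [Real.arccos_cos (by norm_num) (by nlinarith [Real.pi_gt_three])] at ha1
    have hpi : π ≤ 3.141593 := le_of_lt Real.pi_lt_d6
    rw [δoct, h8, lt_div_iff₀ (by positivity)]
    nlinarith
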